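/- Let A be a real m×n matrix, b ∈ ℝ^m, and x ∈ ℝⁿ. Fix a row index i with A A_{i,:}ᵀ ≠ 0 and define the RKAS update x⁺ = x − α A_{i,:}ᵀ with α = ⟨A A_{i,:}ᵀ, A x − b⟩ / ‖A A_{i,:}ᵀ‖₂². Then ‖A x⁺ − A x̄‖₂² = ‖A x − A x̄‖₂² − ⟨A A_{i,:}ᵀ, A x − A x̄⟩² / ‖A A_{i,:}ᵀ‖₂². -/
import Mathlib


open Matrix
open scoped RealInnerProductSpace

/-- `mulE A x` is the matrix-vector product `A x`, viewed as a map between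
Euclidean spaces (so that `‖·‖` is the Euclidean norm and `⟪·,·⟫` the dot product). -/
noncomputable def mulE {m n : ℕ} (A : Matrix (Fin m) (Fin n) ℝ)
    (x : EuclideanSpace ℝ (Fin n)) : EuclideanSpace ℝ (Fin m) :=
  Matrix.toEuclideanLin A x

/-- `rowE A i` is the `i`-th row of `A` (i.e. the vector `A_{i,:}ᵀ`),
viewed as an element of Euclidean space. -/
noncomputable def rowE {m n : ℕ} (A : Matrix (Fin m) (Fin n) ℝ) (i : Fin m) :
    EuclideanSpace ℝ (Fin n) :=
  (EuclideanSpace.equiv (Fin n) ℝ).symm (A i)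

lemma mulE_adjoint {m n : ℕ} (A : Matrix (Fin m) (Fin n) ℝ) (y : EuclideanSpace ℝ (Fin n))
    (z : EuclideanSpace ℝ (Fin m)) : ⟪mulE A y, z⟫ = ⟪y, mulE Aᵀ z⟫ := by
  simp [mulE, Matrix.toEuclideanLin_apply, inner, Matrix.mulVec, dotProduct,
    Finset.mul_sum, Finset.sum_mul]
  rw [Finset.sum_comm]
  congr 1; ext j; congr 1; ext k; ring

lemma mulE_sub_smul {m n : ℕ} (A : Matrix (Fin m) (Fin n) ℝ) (x r : EuclideanSpace ℝ (Fin n))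
    (α : ℝ) : mulE A (x - α • r) = mulE A x - α • mulE A r := by
  simp [mulE, map_sub, _root_.map_smul]

/-- one RKAS step satisfies the exact residual decrease identity
`‖A x⁺ − A x̄‖² = ‖A x − A x̄‖² − ⟨A A_{i,:}ᵀ, A x − A x̄⟩² / ‖A A_{i,:}ᵀ‖²`. -/
theorem rkas_step_residual_identity (m n : ℕ) (A : Matrix (Fin m) (Fin n) ℝ)
    (b : EuclideanSpace ℝ (Fin m)) (x : EuclideanSpace ℝ (Fin n))
    -- `x̄ = A†b`: the unique vector in the row space `Range(Aᵀ)` satisfying the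
    -- normal equations `Aᵀ A x̄ = Aᵀ b`
    (xbar : EuclideanSpace ℝ (Fin n))
    (hxbar_mem : xbar ∈ Set.range (mulE Aᵀ))
    (hxbar_normal : mulE Aᵀ (mulE A xbar) = mulE Aᵀ b)
    -- a row index `i` with `A A_{i,:}ᵀ ≠ 0`
    (i : Fin m) (hAi : mulE A (rowE A i) ≠ 0)
    -- the RKAS stepsize and update
    (α : ℝ) (hα : α = ⟪mulE A (rowE A i), mulE A x - b⟫ / ‖mulE A (rowE A i)‖ ^ 2)
    (xplus : EuclideanSpace ℝ (Fin n)) (hxplus : xplus = x - α • rowE A i) :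
    ‖mulE A xplus - mulE A xbar‖ ^ 2
      = ‖mulE A x - mulE A xbar‖ ^ 2
        - ⟪mulE A (rowE A i), mulE A x - mulE A xbar⟫ ^ 2
          / ‖mulE A (rowE A i)‖ ^ 2 := by
  set v := mulE A (rowE A i) with hv
  set u := mulE A x - mulE A xbar with hu
  have hv2 : ‖v‖ ^ 2 ≠ 0 := pow_ne_zero 2 (norm_ne_zero_iff.mpr hAi)
  have horth : ⟪v, mulE A x - b⟫ = ⟪v, u⟫ := by
    have h0 : ⟪v, b - mulE A xbar⟫ = 0 := by
      rw [hv, mulE_adjoint]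
      have : mulE Aᵀ (b - mulE A xbar) = 0 := by
        simp only [mulE, map_sub] at hxbar_normal ⊢
        rw [← hxbar_normal]; simp [mulE]
      rw [show mulE Aᵀ (b - mulE A xbar) = 0 from this, inner_zero_right]
    have : ⟪v, u⟫ - ⟪v, mulE A x - b⟫ = ⟪v, b - mulE A xbar⟫ := by
      rw [hu, ← inner_sub_right]; congr 1; abel
    linarith [this, h0]
  have hαu : α = ⟪v, u⟫ / ‖v‖ ^ 2 := by rw [hα, horth]
  have hAplus : mulE A xplus - mulE A xbar = u - α • v := by
    rw [hxplus, mulE_sub_smul, hu, hv]; abel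
  rw [hAplus, norm_sub_sq_real, real_inner_smul_right, norm_smul, mul_pow,
    real_inner_comm u v]
  rw [hαu, Real.norm_eq_abs, sq_abs, real_inner_comm v u]
  field_simp
  ring
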